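/- Let g: [-1,1] → ℝ be integrable with g ≥ 0 almost everywhere and moments u_i = ∫_{-1}^{1} v^i g(v) dv for i = 0,…,4, normalized so that u_0 = 1. If u_1² < u_2 < 1, then the fourth-order realizability conditions hold: (u_2³ + u_3² − 2 u_1 u_2 u_3)/(u_2 − u_1²) ≤ u_4 ≤ u_2 − (u_1 − u_3)²/(1 − u_2). -/

import Mathlib

open MeasureTheory

/-- For an integrable, a.e. nonnegative density `g` on `[-1,1]`
with moments `u_i = ∫_{-1}^1 v^i g(v) dv`, normalized so that `u₀ = 1`, and with
`u₁² < u₂ < 1`, the fourth-order realizability conditions hold: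
`(u₂³ + u₃² − 2 u₁ u₂ u₃)/(u₂ − u₁²) ≤ u₄ ≤ u₂ − (u₁ − u₃)²/(1 − u₂)`. -/
theorem statement19 (g : ℝ → ℝ)
    (hgi : IntervalIntegrable g volume (-1) 1)
    (hg0 : ∀ᵐ v ∂volume, v ∈ Set.Icc (-1 : ℝ) 1 → 0 ≤ g v)
    (u : ℕ → ℝ)
    (hu : ∀ i, u i = ∫ v in (-1 : ℝ)..1, v ^ i * g v)
    (hu0 : u 0 = 1)
    (hu2l : u 1 ^ 2 < u 2) (hu2r : u 2 < 1) :
    (u 2 ^ 3 + u 3 ^ 2 - 2 * u 1 * u 2 * u 3) / (u 2 - u 1 ^ 2) ≤ u 4 ∧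
    u 4 ≤ u 2 - (u 1 - u 3) ^ 2 / (1 - u 2) := by
  have hint : ∀ i : ℕ, IntervalIntegrable (fun v => v ^ i * g v) volume (-1) 1 :=
    fun i => hgi.continuousOn_mul (continuous_pow i).continuousOn
  -- linearity: the moment combination
  have comb : ∀ c0 c1 c2 c3 c4 : ℝ,
      (∫ v in (-1:ℝ)..1,
        (c0 * (v ^ 0 * g v) + c1 * (v ^ 1 * g v) + c2 * (v ^ 2 * g v)
          + c3 * (v ^ 3 * g v) + c4 * (v ^ 4 * g v)))
      = c0 * u 0 + c1 * u 1 + c2 * u 2 + c3 * u 3 + c4 * u 4 := by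
    intro c0 c1 c2 c3 c4
    have I0 := (hint 0).const_mul c0
    have I1 := (hint 1).const_mul c1
    have I2 := (hint 2).const_mul c2
    have I3 := (hint 3).const_mul c3
    have I4 := (hint 4).const_mul c4
    rw [intervalIntegral.integral_add (((I0.add I1).add I2).add I3) I4,
      intervalIntegral.integral_add ((I0.add I1).add I2) I3,
      intervalIntegral.integral_add (I0.add I1) I2,
      intervalIntegral.integral_add I0 I1,
      intervalIntegral.integral_const_mul, intervalIntegral.integral_const_mul,
      intervalIntegral.integral_const_mul, intervalIntegral.integral_const_mul,
      intervalIntegral.integral_const_mul, ← hu 0, ← hu 1, ← hu 2, ← hu 3, ← hu 4]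
  -- nonnegativity of moments of nonneg polynomials
  have hnn : ∀ c0 c1 c2 c3 c4 : ℝ,
      (∀ v ∈ Set.Icc (-1:ℝ) 1,
        0 ≤ c0 + c1 * v + c2 * v ^ 2 + c3 * v ^ 3 + c4 * v ^ 4) →
      0 ≤ c0 * u 0 + c1 * u 1 + c2 * u 2 + c3 * u 3 + c4 * u 4 := by
    intro c0 c1 c2 c3 c4 hP
    rw [← comb]
    apply intervalIntegral.integral_nonneg_of_ae_restrict (by norm_num)
    rw [Filter.EventuallyLE, MeasureTheory.ae_restrict_iff' measurableSet_Icc]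
    filter_upwards [hg0] with v hv hvI
    have : c0 * (v ^ 0 * g v) + c1 * (v ^ 1 * g v) + c2 * (v ^ 2 * g v)
        + c3 * (v ^ 3 * g v) + c4 * (v ^ 4 * g v)
        = (c0 + c1 * v + c2 * v ^ 2 + c3 * v ^ 3 + c4 * v ^ 4) * g v := by ring
    rw [this]
    exact mul_nonneg (hP v hvI) (hv hvI)
  have hD : (0:ℝ) < u 2 - u 1 ^ 2 := by linarith
  have hE : (0:ℝ) < 1 - u 2 := by linarith
  constructor
  · -- lower bound: ∫ (v² - αv - β)² g ≥ 0
    set α := (u 3 - u 1 * u 2) / (u 2 - u 1 ^ 2) with hα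
    set β := (u 2 ^ 2 - u 1 * u 3) / (u 2 - u 1 ^ 2) with hβ
    have key := hnn (β ^ 2) (2 * α * β) (α ^ 2 - 2 * β) (-2 * α) 1 (by
      intro v _
      have : β ^ 2 + 2 * α * β * v + (α ^ 2 - 2 * β) * v ^ 2 + -2 * α * v ^ 3 + 1 * v ^ 4
          = (v ^ 2 - α * v - β) ^ 2 := by ring
      rw [this]; positivity)
    rw [hu0] at key
    have hαβ2 : α * (u 2 - u 1 ^ 2) = u 3 - u 1 * u 2 := by rw [hα, div_mul_cancel₀ _ (ne_of_gt hD)]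
    have hβ2 : β * (u 2 - u 1 ^ 2) = u 2 ^ 2 - u 1 * u 3 := by rw [hβ, div_mul_cancel₀ _ (ne_of_gt hD)]
    have h1 : α * u 2 + β * u 1 = u 3 := by
      rw [hα, hβ]; field_simp; ring
    have h2 : α * u 1 + β = u 2 := by
      rw [hα, hβ]; field_simp; ring
    have e : β ^ 2 * 1 + 2 * α * β * u 1 + (α ^ 2 - 2 * β) * u 2 + -2 * α * u 3 + 1 * u 4
        = u 4 - (α * u 3 + β * u 2) := by linear_combination α * h1 + β * h2
    rw [e] at key
    have hstep : α * u 3 + β * u 2 ≤ u 4 := by linarith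
    have efinal : u 2 ^ 3 + u 3 ^ 2 - 2 * u 1 * u 2 * u 3
        = (α * u 3 + β * u 2) * (u 2 - u 1 ^ 2) := by
      linear_combination -u 3 * hαβ2 - u 2 * hβ2
    rw [div_le_iff₀ hD, efinal]
    exact mul_le_mul_of_nonneg_right hstep hD.le
  · -- upper bound: ∫ (1 - v²)(v + c)² g ≥ 0 with c = -(u1 - u3)/(1 - u2)
    set c := -(u 1 - u 3) / (1 - u 2) with hc
    have key := hnn (c ^ 2) (2 * c) (1 - c ^ 2) (-2 * c) (-1) (by
      intro v hvI
      have : c ^ 2 + 2 * c * v + (1 - c ^ 2) * v ^ 2 + -2 * c * v ^ 3 + -1 * v ^ 4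
          = (1 - v ^ 2) * (v + c) ^ 2 := by ring
      rw [this]
      have h1 : v ^ 2 ≤ 1 := by nlinarith [hvI.1, hvI.2]
      exact mul_nonneg (by linarith) (sq_nonneg _))
    rw [hu0] at key
    have hc2 : c * (1 - u 2) = -(u 1 - u 3) := by rw [hc, div_mul_cancel₀ _ (ne_of_gt hE)]
    rw [sub_div' (ne_of_gt hE)] at *
    rw [le_div_iff₀ hE]
    nlinarith [mul_nonneg key hE.le]
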